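/- Let F : Γ₊ → ℝ be twice continuously differentiable, symmetric, strictly monotone, concave, positively homogeneous of degree 1, with F(1,…,1) > 0. Then for all κ ∈ Γ₊: ∑_{i=1}^n ∂F/∂κ_i(κ) ≥ F(1,…,1). -/

import Mathlib

noncomputable section

/-- The open positive cone `Γ₊ ⊆ ℝⁿ`. -/
def GammaPlus (n : ℕ) : Set (Fin n → ℝ) := {κ | ∀ i, 0 < κ i}

lemma isOpen_gammaPlus (n : ℕ) : IsOpen (GammaPlus n) := by
  have : GammaPlus n = ⋂ i, {κ : Fin n → ℝ | 0 < κ i} := by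
    ext κ; simp [GammaPlus]
  rw [this]
  exact isOpen_iInter_of_finite fun i =>
    isOpen_lt continuous_const (continuous_apply i)

lemma gammaPlus_one_mem (n : ℕ) : (fun _ => (1 : ℝ)) ∈ GammaPlus n :=
  fun _ => one_pos

/-- Gradient inequality for a concave function. -/
lemma concave_grad_ineq {n : ℕ} {F : (Fin n → ℝ) → ℝ}
    (hconc : ConcaveOn ℝ (GammaPlus n) F)
    {x y : Fin n → ℝ} (hx : x ∈ GammaPlus n) (hy : y ∈ GammaPlus n)
    {f' : (Fin n → ℝ) →L[ℝ] ℝ} (hd : HasFDerivAt F f' x) :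
    F y ≤ F x + f' (y - x) := by
  set g : ℝ → ℝ := fun t => F (x + t • (y - x)) with hg_def
  have hL : HasDerivAt (fun t : ℝ => x + t • (y - x)) (y - x) 0 := by
    simpa using ((hasDerivAt_id (0:ℝ)).smul_const (y - x)).const_add x
  have hg : HasDerivAt g (f' (y - x)) 0 := by
    have hd' : HasFDerivAt F f' (x + (0:ℝ) • (y - x)) := by simpa using hd
    exact hd'.comp_hasDerivAt 0 hL
  have hslope : Filter.Tendsto (slope g 0) (nhdsWithin 0 (Set.Ioi 0)) (nhds (f' (y - x))) :=
    (hasDerivAt_iff_tendsto_slope.mp hg).mono_left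
      (nhdsWithin_mono 0 fun t ht => ne_of_gt ht)
  have hev : ∀ᶠ t in nhdsWithin 0 (Set.Ioi 0), F y - F x ≤ slope g 0 t := by
    filter_upwards [Ioc_mem_nhdsGT_of_mem (Set.left_mem_Ico.mpr one_pos)] with t ht
    have ht0 : (0:ℝ) < t := ht.1
    have ht1 : t ≤ 1 := ht.2
    have hcomb : (1 - t) • x + t • y = x + t • (y - x) := by
      rw [sub_smul, one_smul, smul_sub]; abel
    have hF : (1 - t) * F x + t * F y ≤ g t := by
      have := hconc.2 hx hy (sub_nonneg.mpr ht1) (le_of_lt ht0) (by ring)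
      rw [hcomb] at this
      simpa [hg_def, smul_eq_mul] using this
    have hg0 : g 0 = F x := by simp [hg_def]
    rw [slope_def_field, sub_zero, le_div_iff₀ ht0, hg0]
    nlinarith
  have := ge_of_tendsto hslope hev
  linarith

/-- Euler's identity for 1-homogeneous functions. -/
lemma euler_identity {n : ℕ} {F : (Fin n → ℝ) → ℝ}
    (hhom : ∀ κ ∈ GammaPlus n, ∀ c : ℝ, 0 < c → F (c • κ) = c * F κ)
    {κ : Fin n → ℝ} (hκ : κ ∈ GammaPlus n)
    {f' : (Fin n → ℝ) →L[ℝ] ℝ} (hd : HasFDerivAt F f' κ) :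
    f' κ = F κ := by
  have hL : HasDerivAt (fun c : ℝ => c • κ) κ 1 := by
    simpa using (hasDerivAt_id (1:ℝ)).smul_const κ
  have h1 : HasDerivAt (fun c : ℝ => F (c • κ)) (f' κ) 1 := by
    have hd' : HasFDerivAt F f' ((1:ℝ) • κ) := by simpa using hd
    exact hd'.comp_hasDerivAt 1 hL
  have heq : (fun c : ℝ => F (c • κ)) =ᶠ[nhds 1] fun c => c * F κ := by
    filter_upwards [isOpen_Ioi.mem_nhds (Set.mem_Ioi.mpr one_pos)] with c hc
    exact hhom κ hκ c hc
  have h2 : HasDerivAt (fun c : ℝ => c * F κ) (f' κ) 1 :=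
    h1.congr_of_eventuallyEq heq.symm
  exact h2.unique (hasDerivAt_mul_const (F κ))

/-- a symmetric, strictly monotone, concave, 1-homogeneous `C²`
curvature function `F` on `Γ₊` with `F(1,…,1) > 0` satisfies
`∑ᵢ ∂F/∂κᵢ(κ) ≥ F(1,…,1)`. -/
theorem concave_curvature_function_deriv_sum (n : ℕ) (F : (Fin n → ℝ) → ℝ)
    (hreg : ContDiffOn ℝ 2 F (GammaPlus n))
    (hsym : ∀ π : Equiv.Perm (Fin n), ∀ κ ∈ GammaPlus n, F (κ ∘ π) = F κ)
    (hmono : ∀ κ ∈ GammaPlus n, ∀ i : Fin n, 0 < fderiv ℝ F κ (Pi.single i 1))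
    (hconc : ConcaveOn ℝ (GammaPlus n) F)
    (hhom : ∀ κ ∈ GammaPlus n, ∀ c : ℝ, 0 < c → F (c • κ) = c * F κ)
    (hpos : 0 < F (fun _ => 1)) :
    ∀ κ ∈ GammaPlus n, F (fun _ => 1) ≤ ∑ i, fderiv ℝ F κ (Pi.single i 1) := by
  intro κ hκ
  have hone : (fun _ => (1:ℝ)) ∈ GammaPlus n := gammaPlus_one_mem n
  have hdiff : DifferentiableAt ℝ F κ :=
    (hreg.contDiffAt ((isOpen_gammaPlus n).mem_nhds hκ)).differentiableAt two_ne_zero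
  have hd : HasFDerivAt F (fderiv ℝ F κ) κ := hdiff.hasFDerivAt
  set f' := fderiv ℝ F κ
  have hgrad : F (fun _ => 1) ≤ F κ + f' ((fun _ => 1) - κ) :=
    concave_grad_ineq hconc hκ hone hd
  have heuler : f' κ = F κ := euler_identity hhom hκ hd
  have hsum : f' (fun _ => 1) = ∑ i, f' (Pi.single i 1) := by
    have h1 : (fun _ => (1:ℝ)) = ∑ i : Fin n, Pi.single i (1:ℝ) := by
      funext j
      simp [Finset.sum_apply, Pi.single_apply]
    rw [h1, map_sum]
  have hsub : f' ((fun _ => 1) - κ) = f' (fun _ => 1) - f' κ := map_sub f' _ _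
  linarith
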